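/- Let n ≥ 1 and let 𝒴_n denote the set of real symmetric n×n matrices Y with Y² = Y (orthogonal projection matrices). Then the convex hull of 𝒴_n equals the set of real symmetric n×n matrices P such that both P and I − P are positive semidefinite (i.e., 0 ⪯ P ⪯ I). -/

import Mathlib

open Matrix

section aux

variable {n : ℕ}

lemma psd_add {A B : Matrix (Fin n) (Fin n) ℝ} (hA : A.PosSemidef) (hB : B.PosSemidef) :
    (A + B).PosSemidef := by
  refine .of_dotProduct_mulVec_nonneg (hA.1.add hB.1) fun x => ?_
  have := add_nonneg (hA.dotProduct_mulVec_nonneg x) (hB.dotProduct_mulVec_nonneg x)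
  simpa [add_mulVec, dotProduct_add] using this

lemma psd_smul {A : Matrix (Fin n) (Fin n) ℝ} (hA : A.PosSemidef) {c : ℝ} (hc : 0 ≤ c) :
    (c • A).PosSemidef := by
  have hH : (c • A).IsHermitian := by
    unfold Matrix.IsHermitian
    rw [conjTranspose_smul, hA.1.eq]
    simp
  refine .of_dotProduct_mulVec_nonneg hH fun x => ?_
  have := mul_nonneg hc (hA.dotProduct_mulVec_nonneg x)
  simpa [smul_mulVec, dotProduct_smul] using this

end aux

theorem stmt14 (n : ℕ) (hn : 1 ≤ n) :
    convexHull ℝ {Y : Matrix (Fin n) (Fin n) ℝ | Y.IsSymm ∧ Y * Y = Y} =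
      {P : Matrix (Fin n) (Fin n) ℝ | P.PosSemidef ∧ (1 - P).PosSemidef} := by
  apply Set.Subset.antisymm
  · apply convexHull_min
    · rintro Y ⟨hs, hp⟩
      have hYH : Yᴴ = Y := by
        ext i j
        simpa using (congrFun (congrFun hs j) i).symm
      constructor
      · have : Y = Yᴴ * Y := by rw [hYH, hp]
        rw [this]; exact posSemidef_conjTranspose_mul_self Y
      · have hZH : (1 - Y)ᴴ = 1 - Y := by
          rw [conjTranspose_sub, hYH, conjTranspose_one]
        have hz : (1 - Y) * (1 - Y) = 1 - Y := by
          simp [sub_mul, mul_sub, hp]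
        have : (1 - Y) = (1 - Y)ᴴ * (1 - Y) := by rw [hZH, hz]
        rw [this]; exact posSemidef_conjTranspose_mul_self _
    · rintro x ⟨hx1, hx2⟩ y ⟨hy1, hy2⟩ a b ha hb hab
      constructor
      · exact psd_add (psd_smul hx1 ha) (psd_smul hy1 hb)
      · have : (1 : Matrix (Fin n) (Fin n) ℝ) - (a • x + b • y)
            = a • (1 - x) + b • (1 - y) := by
          have h1 : a • (1 : Matrix (Fin n) (Fin n) ℝ) + b • 1 = 1 := by
            rw [← add_smul, hab, one_smul]
          rw [smul_sub, smul_sub, sub_add_sub_comm, h1]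
        rw [this]
        exact psd_add (psd_smul hx2 ha) (psd_smul hy2 hb)
  · rintro P ⟨hP, hQ⟩
    have hH : P.IsHermitian := hP.1
    set U : Matrix (Fin n) (Fin n) ℝ := (hH.eigenvectorUnitary : Matrix (Fin n) (Fin n) ℝ) with hU
    have hUU : star U * U = 1 := by simp [hU]
    -- the linear map v ↦ U * diagonal v * star U
    set f : (Fin n → ℝ) → Matrix (Fin n) (Fin n) ℝ :=
      fun v => U * diagonal v * star U with hf
    have hlin : IsLinearMap ℝ f := by
      constructor
      · intro v w
        show U * diagonal (v + w) * star U
            = U * diagonal v * star U + U * diagonal w * star U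
        have hd : diagonal (v + w) = diagonal v + diagonal w := by
          ext i j; by_cases h : i = j <;> simp [Matrix.diagonal_apply, h]
        rw [hd, mul_add, add_mul]
      · intro c v
        show U * diagonal (c • v) * star U = c • (U * diagonal v * star U)
        have hd : diagonal (c • v) = c • diagonal v := by
          ext i j; by_cases h : i = j <;> simp [Matrix.diagonal_apply, h]
        rw [hd, Matrix.mul_smul, Matrix.smul_mul]
    -- eigenvalues are in [0,1]
    have heig : ∀ i, hH.eigenvalues i ∈ Set.Icc (0:ℝ) 1 := by
      intro i
      refine ⟨hP.eigenvalues_nonneg i, ?_⟩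
      set v : Fin n → ℝ := ⇑(hH.eigenvectorBasis i) with hv
      have hnorm : dotProduct v v = 1 := by
        have := hH.eigenvectorBasis.orthonormal.1 i
        have h2 : @inner ℝ _ _ (hH.eigenvectorBasis i) (hH.eigenvectorBasis i) = 1 := by
          rw [real_inner_self_eq_norm_sq, this]; norm_num
        rw [EuclideanSpace.inner_eq_star_dotProduct] at h2
        simpa using h2
      have hmv : P *ᵥ v = hH.eigenvalues i • v := hH.mulVec_eigenvectorBasis i
      have := hQ.dotProduct_mulVec_nonneg v
      rw [sub_mulVec, one_mulVec, hmv] at this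
      simp only [dotProduct_sub, dotProduct_smul, hnorm, star_trivial, smul_eq_mul, mul_one] at this
      linarith
    -- P = f (eigenvalues)
    have hPf : P = f hH.eigenvalues := by
      have := hH.spectral_theorem
      simpa [hf] using this
    -- eigenvalues ∈ convexHull of {0,1}-vectors
    have hmem : hH.eigenvalues ∈ convexHull ℝ (Set.pi Set.univ fun _ : Fin n => ({0, 1} : Set ℝ)) := by
      apply mem_convexHull_pi
      intro i _
      rw [convexHull_pair, segment_eq_Icc (by norm_num : (0:ℝ) ≤ 1)]
      exact heig i
    have himg : f '' (Set.pi Set.univ fun _ : Fin n => ({0, 1} : Set ℝ)) ⊆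
        {Y : Matrix (Fin n) (Fin n) ℝ | Y.IsSymm ∧ Y * Y = Y} := by
      rintro _ ⟨v, hv, rfl⟩
      have hvv : ∀ i, v i * v i = v i := by
        intro i
        have h := hv i (Set.mem_univ i)
        simp only [Set.mem_insert_iff, Set.mem_singleton_iff] at h
        rcases h with h | h <;> simp [h]
      constructor
      · have hherm : (U * diagonal v * star U).IsHermitian := by
          have : (diagonal v).IsHermitian := by
            apply isHermitian_diagonal_of_self_adjoint
            funext i; simp
          simpa [Matrix.star_eq_conjTranspose] using
            isHermitian_mul_mul_conjTranspose U this
        show (U * diagonal v * star U)ᵀ = _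
        rw [← conjTranspose_eq_transpose_of_trivial]
        exact hherm
      · show (U * diagonal v * star U) * (U * diagonal v * star U) = _
        calc (U * diagonal v * star U) * (U * diagonal v * star U)
            = U * (diagonal v * (star U * U) * diagonal v) * star U := by
              simp only [mul_assoc]
          _ = U * diagonal v * star U := by
              rw [hUU, mul_one, diagonal_mul_diagonal]
              congr 2
              exact congrArg diagonal (funext hvv)
    rw [hPf]
    have := hlin.image_convexHull (Set.pi Set.univ fun _ : Fin n => ({0, 1} : Set ℝ))
    have hin : f hH.eigenvalues ∈ f '' convexHull ℝ (Set.pi Set.univ fun _ : Fin n => ({0, 1} : Set ℝ)) :=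
      Set.mem_image_of_mem f hmem
    rw [this] at hin
    exact convexHull_mono himg hin
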